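/- arXiv:1208.2718 — 2 statements merged into one kernel-verified Lean document; each statement's English description precedes it below -/
import Mathlib

section
/- Let (X, d) be a metric space, y ∈ X, T > 0, and f : X → ℝ a function satisfying f(x) ≥ −K − d(x,y)²/(8T) for all x ∈ X, for some constant K ≥ 0. Let h > 0 and let x_0, x_1, …, x_j be a sequence with each x_{i+1} minimizing z ↦ d(x_i, z)²/(2h) + f(z), and suppose j h ≤ T. Then d(x_0, x_j)² ≤ 4 j h ( f(x_0) + K + d(x_0,y)²/(4T) ). -/
/-- Mayer's distance-control lemma for discrete gradient flows: under the quadratic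
lower bound `f(x) ≥ −K − d(x,y)²/(8T)`, a discrete gradient flow with step `h` and
`j h ≤ T` satisfies `d(x₀,x_j)² ≤ 4 j h (f(x₀) + K + d(x₀,y)²/(4T))`. -/
theorem discrete_flow_distance_control
    {X : Type*} [MetricSpace X] (f : X → ℝ) (y : X) (T K : ℝ)
    (hT : 0 < T) (hK : 0 ≤ K)
    (hlb : ∀ x : X, f x ≥ -K - dist x y ^ 2 / (8 * T))
    (h : ℝ) (hh : 0 < h) (x : ℕ → X) (j : ℕ) (hjh : (j : ℝ) * h ≤ T)
    (hmin : ∀ i < j, ∀ z : X,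
      dist (x i) (x (i + 1)) ^ 2 / (2 * h) + f (x (i + 1)) ≤
        dist (x i) z ^ 2 / (2 * h) + f z) :
    dist (x 0) (x j) ^ 2 ≤ 4 * j * h * (f (x 0) + K + dist (x 0) y ^ 2 / (4 * T)) := by
  set D := dist (x 0) (x j) with hD
  set a : ℝ := (j : ℝ) * h with ha
  have h2h : (0:ℝ) < 2 * h := by linarith
  -- step inequality
  have hstep : ∀ i ∈ Finset.range j,
      dist (x i) (x (i + 1)) ^ 2 ≤ 2 * h * (f (x i) - f (x (i + 1))) := by
    intro i hi
    have h0 := hmin i (Finset.mem_range.mp hi) (x i)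
    simp only [dist_self] at h0
    have h1 : dist (x i) (x (i + 1)) ^ 2 / (2 * h) ≤ f (x i) - f (x (i + 1)) := by
      have : (0:ℝ) ^ 2 / (2 * h) = 0 := by simp
      linarith [h0, this]
    have h2 := mul_le_mul_of_nonneg_right h1 h2h.le
    rwa [div_mul_cancel₀ _ (ne_of_gt h2h), mul_comm] at h2
  have hsum : ∑ i ∈ Finset.range j, dist (x i) (x (i + 1)) ^ 2 ≤
      2 * h * (f (x 0) - f (x j)) := by
    calc ∑ i ∈ Finset.range j, dist (x i) (x (i + 1)) ^ 2
        ≤ ∑ i ∈ Finset.range j, 2 * h * (f (x i) - f (x (i + 1))) :=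
          Finset.sum_le_sum hstep
      _ = 2 * h * (f (x 0) - f (x j)) := by
          rw [← Finset.mul_sum, Finset.sum_range_sub' (fun i => f (x i))]
  have hD1 : D ≤ ∑ i ∈ Finset.range j, dist (x i) (x (i + 1)) :=
    dist_le_range_sum_dist x j
  have hCS : (∑ i ∈ Finset.range j, dist (x i) (x (i + 1))) ^ 2 ≤
      (j : ℝ) * ∑ i ∈ Finset.range j, dist (x i) (x (i + 1)) ^ 2 := by
    have := sq_sum_le_card_mul_sum_sq (s := Finset.range j)
      (f := fun i => dist (x i) (x (i + 1)))
    simpa using this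
  have hDnn : 0 ≤ D := dist_nonneg
  have hjnn : (0:ℝ) ≤ a := mul_nonneg (Nat.cast_nonneg j) hh.le
  have hD2 : D ^ 2 ≤ 2 * a * (f (x 0) - f (x j)) := by
    have hjc : (0:ℝ) ≤ (j : ℝ) := Nat.cast_nonneg j
    calc D ^ 2 ≤ (∑ i ∈ Finset.range j, dist (x i) (x (i + 1))) ^ 2 :=
          pow_le_pow_left₀ hDnn hD1 2
      _ ≤ (j : ℝ) * ∑ i ∈ Finset.range j, dist (x i) (x (i + 1)) ^ 2 := hCS
      _ ≤ (j : ℝ) * (2 * h * (f (x 0) - f (x j))) :=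
          mul_le_mul_of_nonneg_left hsum hjc
      _ = 2 * a * (f (x 0) - f (x j)) := by rw [ha]; ring
  -- lower bound on f (x j), cleared of denominators
  have h8T : (0:ℝ) < 8 * T := by linarith
  have hfj := hlb (x j)
  have hfj8 : (-K - f (x j)) * (8 * T) ≤ dist (x j) y ^ 2 := by
    rw [ge_iff_le, sub_le_iff_le_add] at hfj
    exact (le_div_iff₀ h8T).mp (by linarith : (-K - f (x j)) ≤ dist (x j) y ^ 2 / (8 * T))
  have htri : dist (x j) y ≤ D + dist (x 0) y := by
    rw [hD, dist_comm (x 0) (x j)]; exact dist_triangle _ _ _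
  have hsq : dist (x j) y ^ 2 ≤ 2 * D ^ 2 + 2 * dist (x 0) y ^ 2 := by
    nlinarith [dist_nonneg (x := x j) (y := y), dist_nonneg (x := x 0) (y := y),
      sq_nonneg (D - dist (x 0) y)]
  -- combine, all polynomial
  have hcomb : (-K - f (x j)) * (8 * T) ≤ 2 * D ^ 2 + 2 * dist (x 0) y ^ 2 :=
    hfj8.trans hsq
  have h1 := mul_le_mul_of_nonneg_right hD2 hT.le
  have h2 := mul_le_mul_of_nonneg_left hcomb hjnn
  have h3 := mul_le_mul_of_nonneg_right hjh (sq_nonneg D)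
  have G : D ^ 2 * T ≤ 4 * a * ((f (x 0) + K) * T) + a * dist (x 0) y ^ 2 := by
    nlinarith [h1, h2, h3]
  have e1 : 4 * (j:ℝ) * h * (f (x 0) + K + dist (x 0) y ^ 2 / (4 * T)) =
      (4 * a * ((f (x 0) + K) * T) + a * dist (x 0) y ^ 2) / T := by
    field_simp [ha]; ring
  rw [e1, le_div_iff₀ hT]
  exact G
end

section
/- Let (X, d) be a geodesic metric space satisfying the quadrilateral comparison: for x_0,x_1,y_0,y_1 ∈ X with geodesics x_t from x_0 to x_1 and y_t from y_0 to y_1, d(x_t,y_0)² + d(x_{1−t},y_1)² ≤ d(x_0,y_0)² + d(x_1,y_1)² + 2t² d(x_0,x_1)² + t(d(y_0,y_1)² − d(x_0,x_1)²) − t(d(y_0,y_1) − d(x_0,x_1))² for all t ∈ [0,1]. Let f : X → ℝ be geodesically convex, τ > 0, and suppose φ_0 minimizes z ↦ d(ψ_0,z)²/(2τ) + f(z) and φ_1 minimizes z ↦ d(ψ_1,z)²/(2τ) + f(z) for points ψ_0, ψ_1 ∈ X. Then d(φ_0, φ_1) ≤ d(ψ_0, ψ_1). -/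
open Set

/-- In a geodesic metric space satisfying the quadrilateral comparison inequality,
the resolvent (Moreau–Yosida minimizer) operator of a geodesically convex function
is distance nonincreasing. -/
theorem resolvent_distance_nonincreasing
    {X : Type*} [MetricSpace X]
    (geo : X → X → ℝ → X)
    (hgeo : ∀ x y : X, ∀ t ∈ Icc (0:ℝ) 1,
      dist x (geo x y t) = t * dist x y ∧ dist (geo x y t) y = (1 - t) * dist x y)
    (hquad : ∀ x0 x1 y0 y1 : X, ∀ t ∈ Icc (0:ℝ) 1,
      dist (geo x0 x1 t) y0 ^ 2 + dist (geo x0 x1 (1 - t)) y1 ^ 2 ≤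
        dist x0 y0 ^ 2 + dist x1 y1 ^ 2 + 2 * t ^ 2 * dist x0 x1 ^ 2
          + t * (dist y0 y1 ^ 2 - dist x0 x1 ^ 2)
          - t * (dist y0 y1 - dist x0 x1) ^ 2)
    (f : X → ℝ)
    (hconv : ∀ x y : X, ∀ t ∈ Icc (0:ℝ) 1,
      f (geo x y t) ≤ (1 - t) * f x + t * f y)
    (τ : ℝ) (hτ : 0 < τ) (ψ0 ψ1 φ0 φ1 : X)
    (hmin0 : ∀ z : X, dist ψ0 φ0 ^ 2 / (2 * τ) + f φ0 ≤ dist ψ0 z ^ 2 / (2 * τ) + f z)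
    (hmin1 : ∀ z : X, dist ψ1 φ1 ^ 2 / (2 * τ) + f φ1 ≤ dist ψ1 z ^ 2 / (2 * τ) + f z) :
    dist φ0 φ1 ≤ dist ψ0 ψ1 := by
  by_contra h
  push_neg at h
  set D := dist φ0 φ1 with hD
  set dψ := dist ψ0 ψ1 with hdψ
  have hdψ0 : 0 ≤ dψ := dist_nonneg
  have hD0 : 0 < D := lt_of_le_of_lt hdψ0 h
  set t : ℝ := (D - dψ) / (2 * D) with ht
  have ht0 : 0 < t := by
    apply div_pos <;> linarith
  have ht1 : t ≤ 1 := by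
    rw [ht, div_le_one (by linarith)]; linarith
  have htmem : t ∈ Icc (0:ℝ) 1 := ⟨ht0.le, ht1⟩
  have ht1mem : (1 - t) ∈ Icc (0:ℝ) 1 := ⟨by linarith, by linarith⟩
  have h0 := hmin0 (geo φ0 φ1 t)
  have h1 := hmin1 (geo φ0 φ1 (1 - t))
  have hc0 := hconv φ0 φ1 t htmem
  have hc1 := hconv φ0 φ1 (1 - t) ht1mem
  have hq := hquad φ0 φ1 ψ0 ψ1 t htmem
  have hτ' : (0:ℝ) < 2 * τ := by linarith
  have e0 : 2 * τ * (dist ψ0 φ0 ^ 2 / (2 * τ)) = dist ψ0 φ0 ^ 2 := by field_simp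
  have e1 : 2 * τ * (dist ψ1 φ1 ^ 2 / (2 * τ)) = dist ψ1 φ1 ^ 2 := by field_simp
  have e2 : 2 * τ * (dist ψ0 (geo φ0 φ1 t) ^ 2 / (2 * τ)) = dist ψ0 (geo φ0 φ1 t) ^ 2 := by
    field_simp
  have e3 : 2 * τ * (dist ψ1 (geo φ0 φ1 (1 - t)) ^ 2 / (2 * τ))
      = dist ψ1 (geo φ0 φ1 (1 - t)) ^ 2 := by field_simp
  have h0' : dist ψ0 φ0 ^ 2 + 2 * τ * f φ0 ≤
      dist ψ0 (geo φ0 φ1 t) ^ 2 + 2 * τ * f (geo φ0 φ1 t) := by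
    have := mul_le_mul_of_nonneg_left h0 hτ'.le
    linarith [this, e0, e2]
  have h1' : dist ψ1 φ1 ^ 2 + 2 * τ * f φ1 ≤
      dist ψ1 (geo φ0 φ1 (1 - t)) ^ 2 + 2 * τ * f (geo φ0 φ1 (1 - t)) := by
    have := mul_le_mul_of_nonneg_left h1 hτ'.le
    linarith [this, e1, e3]
  have hc0' := mul_le_mul_of_nonneg_left hc0 hτ'.le
  have hc1' := mul_le_mul_of_nonneg_left hc1 hτ'.le
  -- sum: dist ψ0 φ0 ^2 + dist ψ1 φ1 ^2 ≤ dist ψ0 γt ^2 + dist ψ1 γ(1-t) ^2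
  have hsum : dist ψ0 φ0 ^ 2 + dist ψ1 φ1 ^ 2 ≤
      dist ψ0 (geo φ0 φ1 t) ^ 2 + dist ψ1 (geo φ0 φ1 (1 - t)) ^ 2 := by
    have hcsum : 2 * τ * f (geo φ0 φ1 t) + 2 * τ * f (geo φ0 φ1 (1 - t)) ≤
        2 * τ * f φ0 + 2 * τ * f φ1 := by
      have e : 2 * τ * ((1 - t) * f φ0 + t * f φ1) + 2 * τ * ((1 - (1 - t)) * f φ0
          + (1 - t) * f φ1) = 2 * τ * f φ0 + 2 * τ * f φ1 := by ring
      linarith [hc0', hc1']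
    linarith [h0', h1', hcsum]
  rw [dist_comm (geo φ0 φ1 t) ψ0, dist_comm (geo φ0 φ1 (1 - t)) ψ1,
    dist_comm φ0 ψ0, dist_comm φ1 ψ1] at hq
  -- combine: 0 ≤ 2 t² D² + t (dψ² - D²) - t (dψ - D)²
  have key : (0:ℝ) ≤ 2 * t ^ 2 * D ^ 2 + t * (dψ ^ 2 - D ^ 2) - t * (dψ - D) ^ 2 := by
    linarith [hsum, hq]
  have hteq : t * (2 * D) = D - dψ := by
    rw [ht]; field_simp
  have hx : 2 * t ^ 2 * D ^ 2 + t * (dψ ^ 2 - D ^ 2) - t * (dψ - D) ^ 2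
      = -((D - dψ) ^ 2) / 2 := by
    linear_combination (t * D - (D - dψ) / 2) * hteq
  have hpos : 0 < (D - dψ) * (D - dψ) := mul_pos (by linarith) (by linarith)
  rw [hx] at key
  nlinarith [key, hpos]
end
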